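/- ℙ({ x ∈ Δ^{Words} : inf_{k≥1} liminf_{m→∞} (log₂ h_{m,1/k}(x))/m > 0 }) = 0; that is, for ℙ-almost every x, inf_{k≥1} liminf_{m→∞} (log₂ h_{m,1/k}(x))/m = 0. -/

import Mathlib

open MeasureTheory Filter Set
open scoped ENNReal NNReal

/-- The alphabet `Λ = {0,1}^d`, identified with `{0,…,2^d−1}`. -/
abbrev Lam (d : ℕ) := Fin d → Bool

/-- Finite words over the alphabet `Λ` (including the empty word). -/
abbrev Wd (d : ℕ) := List (Lam d)

/-- The ambient space `ℝ^{2^d}` (with the Euclidean metric), coordinates indexed by `Λ`. -/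
abbrev Pt (d : ℕ) := EuclideanSpace ℝ (Lam d)

/-- The simplex `Δ = {x : x_a ≥ 0, Σ_a x_a = 1}` in `ℝ^{2^d}`. -/
def simplexSet (d : ℕ) : Set (Pt d) := {p | (∀ a, 0 ≤ p a) ∧ (∑ a, p a) = 1}

/-- The uniform probability distribution `σ` on the simplex: the normalized restriction to
`Δ` of the `(2^d − 1)`-dimensional Hausdorff measure on `ℝ^{2^d}`. -/
noncomputable def sigmaMeas (d : ℕ) : Measure (Pt d) :=
  ((Measure.hausdorffMeasure ((2 ^ d : ℝ) - 1) : Measure (Pt d)) (simplexSet d))⁻¹ •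
    ((Measure.hausdorffMeasure ((2 ^ d : ℝ) - 1) : Measure (Pt d)).restrict (simplexSet d))

/-- Auxiliary recursion for labels: `labelFrom d x pre w` is the product, over the letters of
`w`, of the coordinates of `x` along the path starting at the node `pre`. -/
noncomputable def labelFrom (d : ℕ) (x : Wd d → Pt d) : Wd d → Wd d → ℝ
  | _, [] => 1
  | pre, a :: w => x pre a * labelFrom d x (pre ++ [a]) w

/-- The label `L(x,w) = Π_{j=1}^{k} x(w_1⋯w_{j−1})_{w_j}` of the word `w` (empty word ↦ 1). -/
noncomputable def label (d : ℕ) (x : Wd d → Pt d) (w : Wd d) : ℝ := labelFrom d x [] w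

/-- A word `w = w_1⋯w_m` is central if for each coordinate `i` the digit string
`(w_1(i),…,w_m(i))` equals `(0,1,1,…,1)` or `(1,0,0,…,0)`. -/
def IsCentral (d : ℕ) (w : Wd d) : Prop :=
  ∀ i : Fin d, ∃ b : Bool, w.map (fun a => a i) = b :: List.replicate (w.length - 1) (!b)

/-- The ratio `L(x,ω)/L(x,ωw)`, with the convention that a zero denominator gives `∞`. -/
noncomputable def ratio (d : ℕ) (x : Wd d → Pt d) (ω w : Wd d) : ℝ≥0∞ :=
  if label d x (ω ++ w) = 0 then ⊤ else ENNReal.ofReal (label d x ω / label d x (ω ++ w))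

/-- `h_{m,δ}(x)`: min over words `ω` of length `⌊m/δ⌋` of the min over central words `w`
of length `m` of `L(x,ω)/L(x,ωw)`. -/
noncomputable def hmd (d : ℕ) (x : Wd d → Pt d) (δ : ℝ) (m : ℕ) : ℝ≥0∞ :=
  ⨅ (ω : Wd d) (_ : ω.length = ⌊(m : ℝ) / δ⌋₊),
    ⨅ (w : Wd d) (_ : w.length = m ∧ IsCentral d w), ratio d x ω w

/-- Base-2 logarithm on `ℝ≥0∞` (with `log₂ ∞ = ∞`). -/
noncomputable def log2 (y : ℝ≥0∞) : ℝ≥0∞ :=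
  if y = ⊤ then ⊤ else ENNReal.ofReal (Real.logb 2 y.toReal)

/-- `liminf_{m→∞} (log₂ h_{m,δ}(x)) / m`. -/
noncomputable def liminfh (d : ℕ) (x : Wd d → Pt d) (δ : ℝ) : ℝ≥0∞ :=
  Filter.liminf (fun m : ℕ => log2 (hmd d x δ m) / (m : ℝ≥0∞)) Filter.atTop

/-! ### Auxiliary lemmas on labels -/

theorem labelFrom_append (d : ℕ) (x : Wd d → Pt d) (u : Wd d) :
    ∀ pre v, labelFrom d x pre (u ++ v) = labelFrom d x pre u * labelFrom d x (pre ++ u) v := by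
  induction u with
  | nil => intro pre v; simp [labelFrom]
  | cons a u ih =>
      intro pre v
      show x pre a * labelFrom d x (pre ++ [a]) (u ++ v) = _
      rw [ih (pre ++ [a]) v]
      show _ = x pre a * labelFrom d x (pre ++ [a]) u * labelFrom d x (pre ++ a :: u) v
      rw [mul_assoc]
      congr 2
      simp

theorem labelFrom_ne_zero (d : ℕ) (x : Wd d → Pt d) (hx : ∀ u a, x u a ≠ 0) (w : Wd d) :
    ∀ pre, labelFrom d x pre w ≠ 0 := by
  induction w with
  | nil => intro pre; simp [labelFrom]
  | cons a w ih => intro pre; simp only [labelFrom]; exact mul_ne_zero (hx _ _) (ih _)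

theorem le_labelFrom (d : ℕ) (x : Wd d → Pt d) {θ : ℝ} (hθ : 0 ≤ θ) (w : Wd d) :
    ∀ pre, (∀ j : ℕ, (hj : j < w.length) → θ ≤ x (pre ++ w.take j) w[j]) →
      θ ^ w.length ≤ labelFrom d x pre w := by
  induction w with
  | nil => intro pre _; simp [labelFrom]
  | cons a w ih =>
      intro pre h
      have h0 : θ ≤ x pre a := by have := h 0 (by simp); rwa [List.take_zero, List.append_nil] at this
      have hrec : θ ^ w.length ≤ labelFrom d x (pre ++ [a]) w := by
        refine ih (pre ++ [a]) fun j hj => ?_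
        have := h (j + 1) (by simpa using hj)
        simpa [List.append_assoc] using this
      calc θ ^ (a :: w).length = θ * θ ^ w.length := by rw [List.length_cons]; ring
      _ ≤ x pre a * labelFrom d x (pre ++ [a]) w :=
          mul_le_mul h0 hrec (pow_nonneg hθ _) ((hθ.trans h0))
      _ = labelFrom d x pre (a :: w) := rfl

/-! ### The chosen central word -/

theorem card_Lam (d : ℕ) : Fintype.card (Lam d) = 2 ^ d := by simp

/-- letter at step `j` of the chosen central word -/
def lw (d : ℕ) (j : ℕ) : Lam d := if j = 0 then (fun _ => false) else (fun _ => true)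

/-- the chosen central word of length `m` -/
def cw (d m : ℕ) : Wd d := List.ofFn (fun j : Fin m => lw d j)

theorem cw_length (d m : ℕ) : (cw d m).length = m := by simp [cw]

theorem cw_eq (d m : ℕ) (hm : 1 ≤ m) :
    cw d m = (fun _ => false) :: List.replicate (m - 1) (fun _ => true) := by
  obtain ⟨m, rfl⟩ : ∃ m', m = m' + 1 := ⟨m - 1, (Nat.succ_pred_eq_of_pos hm).symm⟩
  simp only [cw, List.ofFn_succ, Nat.add_sub_cancel]
  congr 1
  rw [show (fun j : Fin m => lw d ((j : Fin m).succ : ℕ)) =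
      fun _ : Fin m => (fun _ : Fin d => true) from
    funext fun j => by simp [lw]]
  exact List.ofFn_const _ _

theorem cw_central (d m : ℕ) (hm : 1 ≤ m) : IsCentral d (cw d m) := by
  intro i
  refine ⟨false, ?_⟩
  rw [cw_eq d m hm]
  simp [List.map_replicate]

theorem cw_getElem (d m : ℕ) (j : ℕ) (hj : j < m) :
    (cw d m)[j]'(by simp [cw_length, hj]) = lw d j := by
  simp [cw]

/-! ### Geometry of the simplex -/

/-- restriction of coordinates is 1-Lipschitz from Euclidean to sup metric -/
theorem lip_restr (d : ℕ) (a : Lam d) :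
    LipschitzWith 1 (fun (p : Pt d) (b : {b : Lam d // b ≠ a}) => p (b : Lam d)) := by
  have hrestr : LipschitzWith 1
      (fun (y : Lam d → ℝ) (b : {b : Lam d // b ≠ a}) => y (b : Lam d)) := by
    apply LipschitzWith.of_dist_le_mul
    intro y y'
    rw [NNReal.coe_one, one_mul]
    exact (dist_pi_le_iff dist_nonneg).2 fun b => dist_le_pi_dist y y' (b : Lam d)
  have := hrestr.comp (PiLp.lipschitzWith_ofLp 2 (fun _ : Lam d => ℝ))
  rwa [mul_one] at this

theorem haus_slab_pos (d : ℕ) (a : Lam d) {θ : ℝ} (hθ0 : 0 ≤ θ) (hθ : θ < 1) :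
    0 < (Measure.hausdorffMeasure ((2 ^ d : ℝ) - 1) : Measure (Pt d))
      (simplexSet d ∩ {p : Pt d | θ ≤ p a}) := by
  classical
  set n : ℕ := 2 ^ d with hn
  have hn1 : 1 ≤ n := Nat.one_le_two_pow
  set κ := {b : Lam d // b ≠ a} with hκ
  have hcard : Fintype.card κ = n - 1 := by
    show Fintype.card {b : Lam d // b ≠ a} = n - 1
    rw [Fintype.card_subtype_compl, Fintype.card_subtype_eq, card_Lam]
  have hsd : ((2 ^ d : ℝ) - 1) = ((n - 1 : ℕ) : ℝ) := by
    push_cast [Nat.cast_sub hn1]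
    norm_num [hn]
  set f : Pt d → (κ → ℝ) := fun p b => p (b : Lam d) with hf
  set A : Set (Pt d) := simplexSet d ∩ {p : Pt d | θ ≤ p a} with hA
  set B : Set (κ → ℝ) := Set.univ.pi (fun _ => Ioo (0:ℝ) ((1-θ)/n)) with hB
  have hBA : B ⊆ f '' A := by
    intro y hy
    have hy' : ∀ b : κ, 0 < y b ∧ y b < (1-θ)/n := fun b => hy b (mem_univ b)
    set x : Pt d := (WithLp.equiv 2 (Lam d → ℝ)).symm
      (fun b => if h : b = a then 1 - ∑ b' : κ, y b' else y ⟨b, h⟩) with hx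
    have hxb : ∀ b : Lam d, x b = if h : b = a then 1 - ∑ b' : κ, y b' else y ⟨b, h⟩ :=
      fun b => rfl
    have hsum_le : ∑ b' : κ, y b' ≤ 1 - θ := by
      calc ∑ b' : κ, y b' ≤ ∑ _b' : κ, (1-θ)/n := Finset.sum_le_sum fun b _ => (hy' b).2.le
      _ = (n - 1 : ℕ) * ((1-θ)/n) := by rw [Finset.sum_const, Finset.card_univ, hcard]; ring
      _ ≤ n * ((1-θ)/n) := by
          apply mul_le_mul_of_nonneg_right _ (div_nonneg (by linarith) (by positivity))
          exact_mod_cast Nat.cast_le.2 (Nat.sub_le n 1)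
      _ = 1 - θ := by field_simp
    have hsum_nonneg : 0 ≤ ∑ b' : κ, y b' :=
      Finset.sum_nonneg fun b _ => (hy' b).1.le
    have hxa : x a = 1 - ∑ b' : κ, y b' := by rw [hxb]; simp
    have hxmem : x ∈ A := by
      constructor
      · constructor
        · intro b
          rw [hxb]
          split
          · linarith
          · exact (hy' ⟨b, by assumption⟩).1.le
        · -- sum equals 1
          rw [← Finset.sum_erase_add _ _ (Finset.mem_univ a), hxa]
          have : ∑ b ∈ Finset.univ.erase a, x b = ∑ b' : κ, y b' := by
            rw [Finset.sum_subtype (p := fun b => b ≠ a) (Finset.univ.erase a)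
              (fun b => by simp [Finset.mem_erase]) (fun b => x b)]
            refine Finset.sum_congr rfl fun b _ => ?_
            rw [hxb]
            exact dif_neg b.2
          rw [this]; ring
      · rw [mem_setOf_eq, hxa]; linarith
    refine ⟨x, hxmem, ?_⟩
    funext b
    rw [hf]
    simp only
    rw [hxb]
    exact dif_neg b.2
  -- measure chain
  have himg : (Measure.hausdorffMeasure ((2 ^ d : ℝ) - 1) : Measure (κ → ℝ)) (f '' A)
      ≤ (Measure.hausdorffMeasure ((2 ^ d : ℝ) - 1) : Measure (Pt d)) A := by
    have h := (lip_restr d a).hausdorffMeasure_image_le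
      (d := (2 ^ d : ℝ) - 1) (by rw [hsd]; positivity) A
    simpa using h
  have hvol : (Measure.hausdorffMeasure ((2 ^ d : ℝ) - 1) : Measure (κ → ℝ)) B = volume B := by
    rw [hsd, ← hcard]
    rw [MeasureTheory.hausdorffMeasure_pi_real]
  have hBpos : 0 < volume B := by
    rw [hB, volume_pi_pi]
    refine CanonicallyOrderedAdd.prod_pos.2 fun b _ => ?_
    rw [Real.volume_Ioo]
    apply ENNReal.ofReal_pos.2
    have hn0 : (0:ℝ) < n := by exact_mod_cast hn1
    have h1θ : (0:ℝ) < 1 - θ := by linarith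
    simpa using div_pos h1θ hn0
  calc (0:ℝ≥0∞) < volume B := hBpos
  _ = _ := hvol.symm
  _ ≤ (Measure.hausdorffMeasure ((2 ^ d : ℝ) - 1) : Measure (κ → ℝ)) (f '' A) :=
      measure_mono hBA
  _ ≤ _ := himg

theorem haus_face_zero (d : ℕ) (hd : 1 ≤ d) (a : Lam d) :
    (Measure.hausdorffMeasure ((2 ^ d : ℝ) - 1) : Measure (Pt d))
      (simplexSet d ∩ {p : Pt d | p a = 0}) = 0 := by
  classical
  set n : ℕ := 2 ^ d with hn
  have hn2 : 2 ≤ n := by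
    have : 2 ^ 1 ≤ 2 ^ d := Nat.pow_le_pow_right (by norm_num) hd
    simpa [hn] using this
  set a' : Lam d := fun i => !(a i) with ha'
  have haa' : a' ≠ a := by
    intro h
    have := congrFun h ⟨0, hd⟩
    simp [ha'] at this
  set κ := {b : Lam d // b ≠ a ∧ b ≠ a'} with hκ
  have hcard : Fintype.card κ = n - 2 := by
    show Fintype.card {b : Lam d // b ≠ a ∧ b ≠ a'} = n - 2
    have : Fintype.card {b : Lam d // b ≠ a ∧ b ≠ a'}
        = ((Finset.univ.erase a).erase a').card := by
      rw [Fintype.card_subtype]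
      congr 1
      ext b
      simp only [Finset.mem_filter, Finset.mem_univ, true_and, Finset.mem_erase]
      tauto
    rw [this, Finset.card_erase_of_mem (Finset.mem_erase.2 ⟨haa', Finset.mem_univ _⟩),
      Finset.card_erase_of_mem (Finset.mem_univ _), Finset.card_univ, card_Lam]
    omega
  -- the covering map
  set h : (κ → ℝ) → (Lam d → ℝ) := fun y b =>
    if h1 : b = a then 0 else if hb : b = a' then 1 - ∑ b' : κ, y b' else
      y ⟨b, ⟨h1, hb⟩⟩ with hh
  set g : (κ → ℝ) → Pt d := fun y => (WithLp.equiv 2 (Lam d → ℝ)).symm (h y) with hg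
  have hlip_h : LipschitzWith ((Fintype.card κ : ℝ≥0) + 1) h := by
    apply LipschitzWith.of_dist_le_mul
    intro y y'
    refine (dist_pi_le_iff (by positivity)).2 fun b => ?_
    have hb1 : ∀ b' : κ, dist (y b') (y' b') ≤ dist y y' := fun b' => dist_le_pi_dist y y' b'
    by_cases h1 : b = a
    · simp only [hh, dif_pos h1, dist_self]
      positivity
    · by_cases h2 : b = a'
      · simp only [hh, dif_neg h1, dif_pos h2]
        rw [Real.dist_eq]
        have heq : (1 - ∑ b' : κ, y b') - (1 - ∑ b' : κ, y' b')
            = ∑ b' : κ, (y' b' - y b') := by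
          rw [Finset.sum_sub_distrib]; ring
        rw [heq]
        calc |∑ b' : κ, (y' b' - y b')| ≤ ∑ b' : κ, |y' b' - y b'| :=
              Finset.abs_sum_le_sum_abs _ _
        _ ≤ ∑ _b' : κ, dist y y' := Finset.sum_le_sum fun b' _ => by
              rw [← Real.dist_eq, dist_comm]; exact hb1 b'
        _ = (Fintype.card κ : ℝ) * dist y y' := by
              rw [Finset.sum_const, Finset.card_univ]; simp
        _ ≤ ((Fintype.card κ : ℝ≥0) + 1 : ℝ≥0) * dist y y' := by
              push_cast
              have := dist_nonneg (x := y) (y := y')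
              nlinarith
      · simp only [hh, dif_neg h1, dif_neg h2]
        calc dist (y ⟨b, ⟨h1, h2⟩⟩) (y' ⟨b, ⟨h1, h2⟩⟩) ≤ dist y y' := hb1 _
        _ ≤ _ := by
              push_cast
              have := dist_nonneg (x := y) (y := y')
              nlinarith
  have hlip_g : ∃ K : ℝ≥0, LipschitzWith K g := by
    obtain ⟨K, hK⟩ : ∃ K : ℝ≥0, LipschitzWith K
        ((WithLp.equiv 2 (Lam d → ℝ)).symm : (Lam d → ℝ) → Pt d) := by
      refine ⟨_, (PiLp.antilipschitzWith_ofLp 2 (fun _ : Lam d => ℝ)).to_rightInverse ?_⟩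
      exact fun z => (WithLp.equiv 2 (Lam d → ℝ)).apply_symm_apply z
    exact ⟨_, hK.comp hlip_h⟩
  -- the face is contained in the range of g
  have hsub : simplexSet d ∩ {p : Pt d | p a = 0} ⊆ Set.range g := by
    rintro x ⟨⟨hx0, hx1⟩, hxa⟩
    refine ⟨fun b' : κ => x (b' : Lam d), ?_⟩
    rw [hg]
    apply (WithLp.equiv 2 (Lam d → ℝ)).symm_apply_eq.2
    funext b
    show _ = x b
    rw [hh]
    simp only
    by_cases h1 : b = a
    · rw [dif_pos h1, h1]; exact hxa.symm
    · rw [dif_neg h1]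
      by_cases h2 : b = a'
      · rw [dif_pos h2]
        have e1 : ∑ b ∈ (Finset.univ.erase a).erase a', x b = ∑ b' : κ, x (b' : Lam d) := by
          rw [Finset.sum_subtype (p := fun b => b ≠ a ∧ b ≠ a') _
            (fun b => by simp only [Finset.mem_erase, Finset.mem_univ, and_true]; tauto)
            (fun b => x b)]
        have e2 := Finset.sum_erase_add Finset.univ (fun b => x b) (Finset.mem_univ a)
        have e3 := Finset.sum_erase_add (Finset.univ.erase a) (fun b => x b)
          (Finset.mem_erase.2 ⟨haa', Finset.mem_univ a'⟩)
        rw [mem_setOf_eq] at hxa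
        rw [h2]
        rw [e1] at e3
        rw [hx1] at e2
        simp only at e2 e3
        linarith
      · rw [dif_neg h2]
  -- dimension count
  have hdim : dimH (simplexSet d ∩ {p : Pt d | p a = 0}) ≤ (n - 2 : ℕ) := by
    obtain ⟨K, hK⟩ := hlip_g
    calc dimH (simplexSet d ∩ {p : Pt d | p a = 0}) ≤ dimH (Set.range g) :=
          dimH_mono hsub
    _ = dimH (g '' Set.univ) := by rw [Set.image_univ]
    _ ≤ dimH (Set.univ : Set (κ → ℝ)) := hK.dimH_image_le _
    _ = Module.finrank ℝ (κ → ℝ) := Real.dimH_univ_eq_finrank _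
    _ = (n - 2 : ℕ) := by rw [Module.finrank_pi ℝ, hcard]
  have hlt : dimH (simplexSet d ∩ {p : Pt d | p a = 0}) < ((n - 1 : ℕ) : ℝ≥0) := by
    refine hdim.trans_lt ?_
    have : (n - 2 : ℕ) < (n - 1 : ℕ) := by omega
    exact_mod_cast Nat.cast_lt.2 this
  have hzero := hausdorffMeasure_of_dimH_lt hlt
  have hsd : ((2 ^ d : ℝ) - 1) = (((n - 1 : ℕ) : ℝ≥0) : ℝ) := by
    have h1n : (1:ℕ) ≤ n := le_trans one_le_two hn2
    rw [NNReal.coe_natCast, Nat.cast_sub h1n]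
    norm_num [hn]
  rw [hsd]
  exact hzero

theorem meas_eval (d : ℕ) (a : Lam d) : Measurable (fun p : Pt d => p a) :=
  (measurable_pi_apply a).comp (PiLp.lipschitzWith_ofLp 2 (fun _ : Lam d => ℝ)).continuous.measurable

theorem haus_simplex_ne_top (d : ℕ) :
    (Measure.hausdorffMeasure ((2 ^ d : ℝ) - 1) : Measure (Pt d)) (simplexSet d) ≠ ⊤ := by
  classical
  set n : ℕ := 2 ^ d with hn
  have hn1 : 1 ≤ n := Nat.one_le_two_pow
  set a : Lam d := fun _ => false with ha
  set κ := {b : Lam d // b ≠ a} with hκ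
  have hsd0 : (0:ℝ) ≤ (2 ^ d : ℝ) - 1 := by
    have : (1:ℝ) ≤ 2 ^ d := one_le_pow₀ (by norm_num)
    linarith
  set h : (κ → ℝ) → (Lam d → ℝ) := fun y b =>
    if hb : b = a then 1 - ∑ b' : κ, y b' else y ⟨b, hb⟩ with hh
  set g : (κ → ℝ) → Pt d := fun y => (WithLp.equiv 2 (Lam d → ℝ)).symm (h y) with hg
  have hlip_h : LipschitzWith ((Fintype.card κ : ℝ≥0) + 1) h := by
    apply LipschitzWith.of_dist_le_mul
    intro y y'
    refine (dist_pi_le_iff (by positivity)).2 fun b => ?_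
    have hb1 : ∀ b' : κ, dist (y b') (y' b') ≤ dist y y' := fun b' => dist_le_pi_dist y y' b'
    by_cases h1 : b = a
    · simp only [hh, dif_pos h1]
      rw [Real.dist_eq]
      have heq : (1 - ∑ b' : κ, y b') - (1 - ∑ b' : κ, y' b')
          = ∑ b' : κ, (y' b' - y b') := by
        rw [Finset.sum_sub_distrib]; ring
      rw [heq]
      calc |∑ b' : κ, (y' b' - y b')| ≤ ∑ b' : κ, |y' b' - y b'| :=
            Finset.abs_sum_le_sum_abs _ _
      _ ≤ ∑ _b' : κ, dist y y' := Finset.sum_le_sum fun b' _ => by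
            rw [← Real.dist_eq, dist_comm]; exact hb1 b'
      _ = (Fintype.card κ : ℝ) * dist y y' := by
            rw [Finset.sum_const, Finset.card_univ]; simp
      _ ≤ ((Fintype.card κ : ℝ≥0) + 1 : ℝ≥0) * dist y y' := by
            push_cast
            have := dist_nonneg (x := y) (y := y')
            nlinarith
    · simp only [hh, dif_neg h1]
      calc dist (y ⟨b, h1⟩) (y' ⟨b, h1⟩) ≤ dist y y' := hb1 _
      _ ≤ _ := by
            push_cast
            have := dist_nonneg (x := y) (y := y')
            nlinarith
  obtain ⟨K, hK⟩ : ∃ K : ℝ≥0, LipschitzWith K g := by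
    obtain ⟨K0, hK0⟩ : ∃ K0 : ℝ≥0, LipschitzWith K0
        ((WithLp.equiv 2 (Lam d → ℝ)).symm : (Lam d → ℝ) → Pt d) := by
      refine ⟨_, (PiLp.antilipschitzWith_ofLp 2 (fun _ : Lam d => ℝ)).to_rightInverse ?_⟩
      exact fun z => (WithLp.equiv 2 (Lam d → ℝ)).apply_symm_apply z
    exact ⟨_, hK0.comp hlip_h⟩
  set T : Set (κ → ℝ) := Set.univ.pi fun _ => Icc (0:ℝ) 1 with hT
  have hsub : simplexSet d ⊆ g '' T := by
    rintro x ⟨hx0, hx1⟩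
    have hcle : ∀ b : Lam d, x b ≤ 1 := by
      intro b
      rw [← hx1]
      exact Finset.single_le_sum (fun b' _ => hx0 b') (Finset.mem_univ b)
    refine ⟨fun b' : κ => x (b' : Lam d), fun b' _ => ⟨hx0 _, hcle _⟩, ?_⟩
    rw [hg]
    apply (WithLp.equiv 2 (Lam d → ℝ)).symm_apply_eq.2
    funext b
    show _ = x b
    rw [hh]
    simp only
    by_cases h1 : b = a
    · rw [dif_pos h1]
      have e1 : ∑ b ∈ Finset.univ.erase a, x b = ∑ b' : κ, x (b' : Lam d) := by
        rw [Finset.sum_subtype (p := fun b => b ≠ a) _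
          (fun b => by simp [Finset.mem_erase]) (fun b => x b)]
      have e2 := Finset.sum_erase_add Finset.univ (fun b => x b) (Finset.mem_univ a)
      rw [e1, hx1] at e2
      simp only at e2
      rw [h1]
      linarith
    · rw [dif_neg h1]
  have himg : (Measure.hausdorffMeasure ((2 ^ d : ℝ) - 1) : Measure (Pt d)) (g '' T)
      ≤ (K : ℝ≥0∞) ^ ((2 ^ d : ℝ) - 1) *
        (Measure.hausdorffMeasure ((2 ^ d : ℝ) - 1) : Measure (κ → ℝ)) T :=
    hK.hausdorffMeasure_image_le hsd0 T
  have hcard : Fintype.card κ = n - 1 := by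
    show Fintype.card {b : Lam d // b ≠ a} = n - 1
    rw [Fintype.card_subtype_compl, Fintype.card_subtype_eq]
    simp [hn]
  have hsd : ((2 ^ d : ℝ) - 1) = ((n - 1 : ℕ) : ℝ) := by
    push_cast [Nat.cast_sub hn1]
    norm_num [hn]
  have hvol : (Measure.hausdorffMeasure ((2 ^ d : ℝ) - 1) : Measure (κ → ℝ)) T = volume T := by
    rw [hsd, ← hcard, MeasureTheory.hausdorffMeasure_pi_real]
  have hTfin : volume T = 1 := by
    rw [hT, volume_pi_pi]
    simp [Real.volume_Icc]
  refine ne_top_of_le_ne_top ?_ (le_trans (measure_mono hsub) himg)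
  rw [hvol, hTfin, mul_one]
  exact ENNReal.rpow_ne_top_of_nonneg hsd0 ENNReal.coe_ne_top

/-! ### The law of a family of nodes -/

theorem law_of_nodes {A β : Type*} [MeasurableSpace β] {Ω J : Type*} [Fintype Ω] [Fintype J]
    [DecidableEq A]
    (P : Measure (A → β)) (σ : Measure β) [IsProbabilityMeasure σ] [IsProbabilityMeasure P]
    (hP : ∀ F : Finset A, P.map (fun x (w : F) => x (w : A)) = Measure.pi fun _ : F => σ)
    (nd : Ω → J → A) (hinj : Function.Injective (fun p : Ω × J => nd p.1 p.2)) :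
    P.map (fun x (ω : Ω) (j : J) => x (nd ω j))
      = Measure.pi (fun _ : Ω => Measure.pi (fun _ : J => σ)) := by
  classical
  set F : Finset A := Finset.image (fun p : Ω × J => nd p.1 p.2) Finset.univ with hF
  have hmem : ∀ ω j, nd ω j ∈ F := fun ω j =>
    Finset.mem_image.2 ⟨(ω, j), Finset.mem_univ _, rfl⟩
  -- the bijection between Ω × J and F
  have hbij : Function.Bijective (fun p : Ω × J => (⟨nd p.1 p.2, hmem p.1 p.2⟩ : F)) := by
    constructor
    · intro p q h
      exact hinj (congrArg Subtype.val h)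
    · rintro ⟨i, hi⟩
      obtain ⟨p, -, rfl⟩ := Finset.mem_image.1 hi
      exact ⟨p, rfl⟩
  set e : Ω × J ≃ F := Equiv.ofBijective _ hbij with he
  have he_apply : ∀ p : Ω × J, ((e p : F) : A) = nd p.1 p.2 := fun p => rfl
  set res : (A → β) → (F → β) := fun x i => x i with hres
  have hres_meas : Measurable res := measurable_pi_lambda _ fun i => measurable_pi_apply _
  set Ψ : (F → β) → (Ω → J → β) := fun y ω j => y ⟨nd ω j, hmem ω j⟩ with hΨ
  have hΨ_meas : Measurable Ψ :=
    measurable_pi_lambda _ fun ω => measurable_pi_lambda _ fun j => measurable_pi_apply _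
  have hcomp : (fun x (ω : Ω) (j : J) => x (nd ω j)) = Ψ ∘ res := rfl
  rw [hcomp, ← Measure.map_map hΨ_meas hres_meas, hP F]
  -- now show that the mapped pi measure is the double pi measure
  refine (Measure.pi_eq_generateFrom (C := fun _ : Ω =>
      Set.pi univ '' Set.pi univ fun _ : J => {s : Set β | MeasurableSet s})
    (fun _ => generateFrom_pi) (fun _ => isPiSystem_pi) (fun _ => ?_) ?_).symm
  · exact ⟨fun _ => univ, fun _ => ⟨fun _ => univ, fun _ _ => MeasurableSet.univ, by simp⟩,
      fun _ => by simp [measure_lt_top], by simp [iUnion_const]⟩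
  · intro s hs
    choose t ht hts using hs
    have htm : ∀ ω j, MeasurableSet (t ω j) := fun ω j => ht ω j (mem_univ j)
    have hsm : ∀ ω, MeasurableSet (s ω) := by
      intro ω; rw [← hts ω]; exact MeasurableSet.univ_pi (htm ω)
    rw [Measure.map_apply hΨ_meas (MeasurableSet.univ_pi hsm)]
    have hkey : ∀ i : F, (⟨nd (e.symm i).1 (e.symm i).2, hmem _ _⟩ : F) = i := fun i =>
      e.apply_symm_apply i
    have hpre : Ψ ⁻¹' (univ.pi s) = univ.pi (fun i : F => t (e.symm i).1 (e.symm i).2) := by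
      ext y
      simp only [mem_preimage, Set.mem_pi, mem_univ, forall_true_left, hΨ]
      constructor
      · intro h i
        have h1 := h (e.symm i).1
        rw [← hts (e.symm i).1] at h1
        have h2 := h1 (e.symm i).2 (mem_univ _)
        beta_reduce at h2
        rwa [hkey i] at h2
      · intro h ω
        rw [← hts ω]
        intro j _
        have h1 := h (e (ω, j))
        have hsymm : e.symm (e (ω, j)) = (ω, j) := e.symm_apply_apply _
        rw [hsymm] at h1
        exact h1
    rw [hpre, Measure.pi_pi]
    have : ∏ i : F, σ (t (e.symm i).1 (e.symm i).2)
        = ∏ p : Ω × J, σ (t (e.symm (e p)).1 (e.symm (e p)).2) := (Equiv.prod_comp e _).symm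
    rw [this]
    simp only [Equiv.symm_apply_apply]
    rw [Fintype.prod_prod_type]
    refine Finset.prod_congr rfl fun ω _ => ?_
    rw [← hts ω, Measure.pi_pi]

/-! ### Nodes -/

/-- The node at step `j` along the chosen central word, starting from the word `ω`. -/
def nodeOf (d m k : ℕ) (ω : Fin (m * k) → Lam d) (j : Fin m) : Wd d :=
  List.ofFn ω ++ (cw d m).take j

theorem nodeOf_inj (d m k : ℕ) :
    Function.Injective (fun p : (Fin (m * k) → Lam d) × Fin m => nodeOf d m k p.1 p.2) := by
  rintro ⟨ω, j⟩ ⟨ω', j'⟩ h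
  simp only [nodeOf] at h
  have hlen := congrArg List.length h
  simp only [List.length_append, List.length_ofFn, List.length_take, cw_length] at hlen
  have hj : (j : ℕ) = (j' : ℕ) := by
    have h1 : min (j : ℕ) m = (j : ℕ) := min_eq_left j.isLt.le
    have h2 : min (j' : ℕ) m = (j' : ℕ) := min_eq_left j'.isLt.le
    omega
  have hjj : j = j' := Fin.ext hj
  subst hjj
  have hof : List.ofFn ω = List.ofFn ω' := List.append_inj_left h (by simp)
  have hωω : ω = ω' := List.ofFn_injective hof
  rw [hωω]

/-! ### Pointwise bound on `hmd` -/

theorem hmd_le_of_success (d : ℕ) (x : Wd d → Pt d) (hnz : ∀ u a, x u a ≠ 0)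
    (k m : ℕ) (hk : 1 ≤ k) (hm : 1 ≤ m) {θ : ℝ} (hθ0 : 0 < θ)
    (ω : Fin (m * k) → Lam d)
    (hsucc : ∀ j : Fin m, θ ≤ x (nodeOf d m k ω j) (lw d j)) :
    hmd d x (1 / (k : ℝ)) m ≤ ENNReal.ofReal ((θ ^ m)⁻¹) := by
  have hk0 : (k : ℝ) ≠ 0 := by positivity
  have hfloor : ⌊(m : ℝ) / (1 / (k : ℝ))⌋₊ = m * k := by
    rw [show (m : ℝ) / (1 / (k : ℝ)) = ((m * k : ℕ) : ℝ) by push_cast; field_simp]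
    exact Nat.floor_natCast _
  set ω' : Wd d := List.ofFn ω with hω'
  have hlen : ω'.length = ⌊(m : ℝ) / (1 / (k : ℝ))⌋₊ := by rw [hfloor, hω']; simp
  have hcw : (cw d m).length = m ∧ IsCentral d (cw d m) := ⟨cw_length d m, cw_central d m hm⟩
  have h1 : hmd d x (1 / (k : ℝ)) m ≤ ratio d x ω' (cw d m) :=
    le_trans (iInf_le _ ω') (le_trans (iInf_le _ hlen)
      (le_trans (iInf_le _ (cw d m)) (iInf_le _ hcw)))
  refine h1.trans ?_
  have ht : θ ^ m ≤ labelFrom d x ω' (cw d m) := by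
    have hcc := le_labelFrom d x hθ0.le (cw d m) ω' ?_
    · rwa [cw_length] at hcc
    · intro j hj
      have hj' : j < m := by rwa [cw_length] at hj
      have hs := hsucc ⟨j, hj'⟩
      rw [cw_getElem d m j hj']
      exact hs
  have htpos : 0 < labelFrom d x ω' (cw d m) := lt_of_lt_of_le (pow_pos hθ0 m) ht
  have hsplit : label d x (ω' ++ cw d m) = label d x ω' * labelFrom d x ω' (cw d m) := by
    rw [label, labelFrom_append]
    rw [label, List.nil_append]
  have hLne : label d x ω' ≠ 0 := labelFrom_ne_zero d x hnz ω' []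
  have hdenne : label d x (ω' ++ cw d m) ≠ 0 := by
    rw [hsplit]; exact mul_ne_zero hLne htpos.ne'
  rw [ratio, if_neg hdenne, hsplit]
  have hquot : label d x ω' / (label d x ω' * labelFrom d x ω' (cw d m))
      = (labelFrom d x ω' (cw d m))⁻¹ := by
    field_simp
  rw [hquot]
  apply ENNReal.ofReal_le_ofReal
  exact inv_anti₀ (pow_pos hθ0 m) ht

/-- `ℙ(inf_{k≥1} liminf_m (log₂ h_{m,1/k})/m > 0) = 0`; that is, for
`ℙ`-a.e. `x`, `inf_{k≥1} liminf_m (log₂ h_{m,1/k}(x))/m = 0`. -/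
theorem stmt13 (d : ℕ) (hd : 1 ≤ d) (P : Measure (Wd d → Pt d)) [IsProbabilityMeasure P]
    (hP : ∀ F : Finset (Wd d),
      P.map (fun x (w : F) => x (w : Wd d)) = Measure.pi fun _ : F => sigmaMeas d) :
    P {x : Wd d → Pt d | 0 < ⨅ (k : ℕ) (_ : 1 ≤ k), liminfh d x (1 / (k : ℝ))} = 0 ∧
    ∀ᵐ x ∂P, (⨅ (k : ℕ) (_ : 1 ≤ k), liminfh d x (1 / (k : ℝ))) = 0 := by
  classical
  -- sigma is a probability measure
  set H : Measure (Pt d) := Measure.hausdorffMeasure ((2 ^ d : ℝ) - 1) with hH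
  set c : ℝ≥0∞ := H (simplexSet d) with hc
  have hcT : c ≠ ⊤ := haus_simplex_ne_top d
  have hc0 : c ≠ 0 := by
    have hpos := haus_slab_pos d (fun _ => false) (le_refl (0:ℝ)) one_pos
    exact (lt_of_lt_of_le hpos (measure_mono Set.inter_subset_left)).ne'
  have hσ_univ : sigmaMeas d Set.univ = 1 := by
    rw [sigmaMeas, Measure.smul_apply, smul_eq_mul, Measure.restrict_apply_univ]
    exact ENNReal.inv_mul_cancel hc0 hcT
  haveI hσprob : IsProbabilityMeasure (sigmaMeas d) := ⟨hσ_univ⟩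
  have hσ_apply : ∀ A : Set (Pt d), MeasurableSet A →
      sigmaMeas d A = c⁻¹ * H (simplexSet d ∩ A) := by
    intro A hA
    rw [sigmaMeas, Measure.smul_apply, smul_eq_mul, Measure.restrict_apply hA, Set.inter_comm]
  have hslab_meas : ∀ (a : Lam d) (θ : ℝ), MeasurableSet {p : Pt d | θ ≤ p a} :=
    fun a θ => measurableSet_le measurable_const (meas_eval d a)
  have hzero_meas : ∀ a : Lam d, MeasurableSet {p : Pt d | p a = 0} := fun a =>
    (meas_eval d a) (measurableSet_singleton 0)
  have hσ_zero : ∀ a : Lam d, sigmaMeas d {p : Pt d | p a = 0} = 0 := fun a => by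
    rw [hσ_apply _ (hzero_meas a), hH]
    rw [haus_face_zero d hd a, mul_zero]
  have hσ_slab_pos : ∀ (a : Lam d) (θ : ℝ), 0 ≤ θ → θ < 1 →
      0 < sigmaMeas d {p : Pt d | θ ≤ p a} := by
    intro a θ h0 h1
    rw [hσ_apply _ (hslab_meas a θ)]
    exact ENNReal.mul_pos (ENNReal.inv_ne_zero.2 hcT) (haus_slab_pos d a h0 h1).ne'
  -- a.e. all coordinates nonzero
  have hnonzero_ae : ∀ᵐ x ∂P, ∀ (u : Wd d) (a : Lam d), x u a ≠ 0 := by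
    rw [ae_all_iff]
    intro u
    rw [ae_all_iff]
    intro a
    have hmeasF : Measurable (fun (x : Wd d → Pt d)
        (w : ({u} : Finset (Wd d))) => x (w : Wd d)) :=
      measurable_pi_lambda _ fun w => measurable_pi_apply _
    have hset : {x : Wd d → Pt d | x u a = 0}
        = (fun (x : Wd d → Pt d) (w : ({u} : Finset (Wd d))) => x (w : Wd d)) ⁻¹'
          (Set.univ.pi fun _ => {p : Pt d | p a = 0}) := by
      ext x
      simp only [mem_setOf_eq, mem_preimage, Set.mem_pi, mem_univ, forall_true_left]
      constructor
      · rintro h ⟨v, hv⟩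
        rw [Finset.mem_singleton] at hv
        subst hv
        exact h
      · intro h
        exact h ⟨u, Finset.mem_singleton_self u⟩
    rw [ae_iff]
    have hsimp : {x : Wd d → Pt d | ¬ x u a ≠ 0} = {x : Wd d → Pt d | x u a = 0} := by
      ext x; simp
    rw [hsimp, hset, ← Measure.map_apply hmeasF
      (MeasurableSet.univ_pi fun _ => hzero_meas a), hP, Measure.pi_pi]
    exact Finset.prod_eq_zero
      (Finset.mem_univ (⟨u, Finset.mem_singleton_self u⟩ : ({u} : Finset (Wd d))))
      (hσ_zero a)
  -- the per-i parameter
  set θi : ℕ → ℝ := fun i => (2 : ℝ) ^ (-(1 : ℝ) / (i + 1)) with hθi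
  have hθpos : ∀ i, 0 < θi i := fun i => Real.rpow_pos_of_pos (by norm_num) _
  have hθlt1 : ∀ i, θi i < 1 := by
    intro i
    apply Real.rpow_lt_one_of_one_lt_of_neg (by norm_num)
    rw [neg_div, neg_lt, neg_zero]
    positivity
  have hθlogb : ∀ i, Real.logb 2 (θi i)⁻¹ = 1 / (i + 1) := by
    intro i
    rw [hθi]
    simp only
    rw [← Real.rpow_neg (by norm_num), neg_div, neg_neg]
    exact Real.logb_rpow (by norm_num) (by norm_num)
  -- main Borel–Cantelli input
  have main : ∀ i : ℕ, ∃ k : ℕ, 1 ≤ k ∧ ∀ᵐ x ∂P, ∀ᶠ m in atTop,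
      ∃ ω : Fin (m * k) → Lam d, ∀ j : Fin m, θi i ≤ x (nodeOf d m k ω j) (lw d j) := by
    intro i
    set θ : ℝ := θi i with hθdef
    -- lower bound on slab measures
    set pe : ℝ≥0∞ := (sigmaMeas d {p : Pt d | θ ≤ p (fun _ => false : Lam d)})
      ⊓ (sigmaMeas d {p : Pt d | θ ≤ p (fun _ => true : Lam d)}) with hpe
    have hpe_pos : 0 < pe :=
      lt_min (hσ_slab_pos _ θ (hθpos i).le (hθlt1 i)) (hσ_slab_pos _ θ (hθpos i).le (hθlt1 i))
    have hpe_le_one : pe ≤ 1 := le_trans (min_le_left _ _) prob_le_one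
    have hpe_ne_top : pe ≠ ⊤ := (lt_of_le_of_lt hpe_le_one (by norm_num)).ne
    have hpe_le : ∀ j : ℕ, pe ≤ sigmaMeas d {p : Pt d | θ ≤ p (lw d j)} := by
      intro j
      by_cases hj : j = 0
      · rw [lw, if_pos hj]; exact min_le_left _ _
      · rw [lw, if_neg hj]; exact min_le_right _ _
    set ρ : ℝ := pe.toReal with hρ
    have hρpos : 0 < ρ := ENNReal.toReal_pos hpe_pos.ne' hpe_ne_top
    have hρ1 : ρ ≤ 1 := by
      rw [hρ, ← ENNReal.toReal_one]
      exact ENNReal.toReal_mono (by norm_num) hpe_le_one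
    have hofρ : ENNReal.ofReal ρ = pe := ENNReal.ofReal_toReal hpe_ne_top
    -- choose k
    obtain ⟨n0, hn0⟩ : ∃ n0 : ℕ, 2 / ρ < 2 ^ n0 := pow_unbounded_of_one_lt _ one_lt_two
    set k : ℕ := n0 + 1 with hk
    have hk1 : 1 ≤ k := by omega
    have hkρ : (2 : ℝ) ≤ ρ * 2 ^ (d * k) := by
      have hpow : (2 : ℝ) ^ n0 ≤ 2 ^ (d * k) := by
        apply pow_le_pow_right₀ (by norm_num)
        calc n0 ≤ k := by omega
        _ = 1 * k := (one_mul k).symm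
        _ ≤ d * k := Nat.mul_le_mul_right k hd
      calc (2 : ℝ) = ρ * (2 / ρ) := by field_simp
      _ ≤ ρ * 2 ^ n0 := by nlinarith
      _ ≤ ρ * 2 ^ (d * k) := by nlinarith
    refine ⟨k, hk1, ?_⟩
    -- the bad events
    have hbad : ∀ m : ℕ,
        P {x : Wd d → Pt d | ∀ ω : Fin (m * k) → Lam d, ∃ j : Fin m,
            x (nodeOf d m k ω j) (lw d j) < θ}
          ≤ ENNReal.ofReal (Real.exp (-1) ^ m) := by
      intro m
      -- use the law of nodes
      have hlaw := law_of_nodes P (sigmaMeas d) hP (nodeOf d m k) (nodeOf_inj d m k)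
      set Φ : (Wd d → Pt d) → ((Fin (m * k) → Lam d) → Fin m → Pt d) :=
        fun x ω j => x (nodeOf d m k ω j) with hΦ
      have hΦ_meas : Measurable Φ :=
        measurable_pi_lambda _ fun ω => measurable_pi_lambda _ fun j => measurable_pi_apply _
      set C : Set (Fin m → Pt d) := Set.univ.pi fun j : Fin m => {p : Pt d | θ ≤ p (lw d j)}
        with hC
      have hC_meas : MeasurableSet C := MeasurableSet.univ_pi fun j => hslab_meas _ θ
      have hset : {x : Wd d → Pt d | ∀ ω : Fin (m * k) → Lam d, ∃ j : Fin m,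
          x (nodeOf d m k ω j) (lw d j) < θ}
          = Φ ⁻¹' (Set.univ.pi fun _ : (Fin (m * k) → Lam d) => Cᶜ) := by
        ext x
        simp only [mem_setOf_eq, mem_preimage, Set.mem_pi, mem_univ, forall_true_left,
          mem_compl_iff, hC, hΦ, not_forall, not_le]
      rw [hset, ← Measure.map_apply hΦ_meas
        (MeasurableSet.univ_pi fun _ => hC_meas.compl), hlaw, Measure.pi_pi]
      -- each factor is 1 - q
      have hq : ∀ ω : Fin (m * k) → Lam d,
          (Measure.pi fun _ : Fin m => sigmaMeas d) Cᶜ ≤ ENNReal.ofReal (1 - ρ ^ m) := by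
        intro ω
        have hqC : ENNReal.ofReal (ρ ^ m) ≤ (Measure.pi fun _ : Fin m => sigmaMeas d) C := by
          rw [hC, Measure.pi_pi]
          calc ENNReal.ofReal (ρ ^ m) = (ENNReal.ofReal ρ) ^ m := by
                rw [ENNReal.ofReal_pow hρpos.le]
          _ = pe ^ m := by rw [hofρ]
          _ = ∏ _j : Fin m, pe := by rw [Finset.prod_const, Finset.card_univ, Fintype.card_fin]
          _ ≤ ∏ j : Fin m, sigmaMeas d {p : Pt d | θ ≤ p (lw d j)} :=
                Finset.prod_le_prod' fun j _ => hpe_le j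
        have hcompl : (Measure.pi fun _ : Fin m => sigmaMeas d) Cᶜ
            = 1 - (Measure.pi fun _ : Fin m => sigmaMeas d) C := by
          rw [measure_compl hC_meas (measure_ne_top _ _), measure_univ]
        rw [hcompl]
        calc 1 - (Measure.pi fun _ : Fin m => sigmaMeas d) C
            ≤ 1 - ENNReal.ofReal (ρ ^ m) := tsub_le_tsub_left hqC 1
        _ = ENNReal.ofReal 1 - ENNReal.ofReal (ρ ^ m) := by rw [ENNReal.ofReal_one]
        _ = ENNReal.ofReal (1 - ρ ^ m) := (ENNReal.ofReal_sub 1 (by positivity)).symm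
      calc ∏ _ω : Fin (m * k) → Lam d, (Measure.pi fun _ : Fin m => sigmaMeas d) Cᶜ
          ≤ ∏ _ω : Fin (m * k) → Lam d, ENNReal.ofReal (1 - ρ ^ m) :=
            Finset.prod_le_prod' fun ω _ => hq ω
      _ = ENNReal.ofReal (1 - ρ ^ m) ^ (2 ^ d) ^ (m * k) := by
            rw [Finset.prod_const, Finset.card_univ, Fintype.card_fun, card_Lam,
              Fintype.card_fin]
      _ = ENNReal.ofReal ((1 - ρ ^ m) ^ (2 ^ d) ^ (m * k)) := by
            rw [ENNReal.ofReal_pow (by nlinarith [pow_le_one₀ hρpos.le hρ1 (n := m)])]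
      _ ≤ ENNReal.ofReal (Real.exp (-1) ^ m) := by
            apply ENNReal.ofReal_le_ofReal
            have hρm1 : ρ ^ m ≤ 1 := pow_le_one₀ hρpos.le hρ1
            have hρm0 : 0 < ρ ^ m := pow_pos hρpos m
            set N : ℕ := (2 ^ d) ^ (m * k) with hN
            have hstep1 : (1 - ρ ^ m) ^ N ≤ Real.exp (-(ρ ^ m)) ^ N := by
              apply pow_le_pow_left₀ (by linarith)
              have := Real.add_one_le_exp (-(ρ ^ m))
              linarith
            have hNval : ((N : ℝ)) = 2 ^ (d * (m * k)) := by
              rw [hN]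
              push_cast
              rw [← pow_mul]
            have hstep2 : Real.exp (-(ρ ^ m)) ^ N = Real.exp (-(ρ ^ m * N)) := by
              rw [← Real.exp_nat_mul]
              congr 1
              ring
            have hbig : (2 : ℝ) ^ m ≤ ρ ^ m * N := by
              rw [hNval]
              have h2 : (2:ℝ) ^ (d * (m * k)) = ((2:ℝ) ^ (d * k)) ^ m := by
                rw [← pow_mul]
                congr 1
                ring
              rw [h2, ← mul_pow]
              exact pow_le_pow_left₀ (by norm_num) hkρ m
            have hm2 : (m : ℝ) ≤ 2 ^ m := by exact_mod_cast (m.lt_two_pow_self).le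
            calc (1 - ρ ^ m) ^ N ≤ Real.exp (-(ρ ^ m)) ^ N := hstep1
            _ = Real.exp (-(ρ ^ m * N)) := hstep2
            _ ≤ Real.exp (-(2 ^ m)) := by
                apply Real.exp_le_exp.2
                linarith
            _ ≤ Real.exp (-(m : ℝ)) := by
                apply Real.exp_le_exp.2
                linarith
            _ = Real.exp (-1) ^ m := by
                rw [← Real.exp_nat_mul]
                congr 1
                ring
    -- Borel–Cantelli
    have hsum : ∑' m : ℕ, P {x : Wd d → Pt d | ∀ ω : Fin (m * k) → Lam d, ∃ j : Fin m,
        x (nodeOf d m k ω j) (lw d j) < θ} ≠ ⊤ := by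
      have hgeom : Summable (fun m : ℕ => Real.exp (-1) ^ m) :=
        summable_geometric_of_lt_one (Real.exp_pos _).le
          (Real.exp_lt_one_iff.2 (by norm_num))
      apply ne_top_of_le_ne_top _ (ENNReal.tsum_le_tsum fun m => hbad m)
      rw [← ENNReal.ofReal_tsum_of_nonneg (fun m => by positivity) hgeom]
      exact ENNReal.ofReal_ne_top
    have hBC := measure_setOf_frequently_eq_zero (μ := P)
      (p := fun m x => ∀ ω : Fin (m * k) → Lam d, ∃ j : Fin m,
        x (nodeOf d m k ω j) (lw d j) < θ) hsum
    rw [ae_iff]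
    apply measure_mono_null _ hBC
    intro x hx
    rw [mem_setOf_eq, Filter.not_eventually] at hx
    refine hx.mono fun m hm => ?_
    intro ω
    by_contra hcon
    push_neg at hcon
    exact hm ⟨ω, hcon⟩
  -- combine
  choose ki hki1 hkiae using main
  have hae : ∀ᵐ x ∂P, (⨅ (k : ℕ) (_ : 1 ≤ k), liminfh d x (1 / (k : ℝ))) = 0 := by
    have hall : ∀ᵐ x ∂P, ∀ i : ℕ, ∀ᶠ m in atTop,
        ∃ ω : Fin (m * ki i) → Lam d, ∀ j : Fin m,
          θi i ≤ x (nodeOf d (m) (ki i) ω j) (lw d j) := ae_all_iff.2 hkiae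
    filter_upwards [hnonzero_ae, hall] with x hnz hx
    -- for each i, the liminf with k = ki i is at most ofReal (1/(i+1))
    have hbound : ∀ i : ℕ, liminfh d x (1 / (ki i : ℝ)) ≤ ENNReal.ofReal (1 / (i + 1)) := by
      intro i
      have hev : ∀ᶠ m in atTop, log2 (hmd d x (1 / (ki i : ℝ)) m) / (m : ℝ≥0∞)
          ≤ ENNReal.ofReal (Real.logb 2 (θi i)⁻¹) := by
        filter_upwards [hx i, eventually_ge_atTop 1] with m hm hm1
        obtain ⟨ω, hω⟩ := hm
        have hb := hmd_le_of_success d x hnz (ki i) m (hki1 i) hm1 (hθpos i) ω hω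
        have hne : hmd d x (1 / (ki i : ℝ)) m ≠ ⊤ :=
          ne_top_of_le_ne_top ENNReal.ofReal_ne_top hb
        rw [log2, if_neg hne]
        have htR : (hmd d x (1 / (ki i : ℝ)) m).toReal ≤ ((θi i) ^ m)⁻¹ := by
          apply ENNReal.toReal_le_of_le_ofReal _ hb
          have := hθpos i
          positivity
        have hlognn : 0 ≤ Real.logb 2 (θi i)⁻¹ :=
          Real.logb_nonneg one_lt_two (one_le_inv_iff₀.2 ⟨hθpos i, (hθlt1 i).le⟩)
        have hlog : Real.logb 2 (hmd d x (1 / (ki i : ℝ)) m).toReal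
            ≤ m * Real.logb 2 (θi i)⁻¹ := by
          rcases eq_or_lt_of_le (ENNReal.toReal_nonneg
            (a := hmd d x (1 / (ki i : ℝ)) m)) with h0 | h0
          · rw [← h0]
            simp only [Real.logb_zero]
            positivity
          · calc Real.logb 2 (hmd d x (1 / (ki i : ℝ)) m).toReal
                ≤ Real.logb 2 (((θi i) ^ m)⁻¹) := Real.logb_le_logb_of_le one_lt_two h0 htR
            _ = Real.logb 2 (((θi i)⁻¹) ^ m) := by rw [inv_pow]
            _ = m * Real.logb 2 (θi i)⁻¹ := Real.logb_pow 2 _ m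
        have hm0 : (m : ℝ≥0∞) ≠ 0 := by exact_mod_cast Nat.one_le_iff_ne_zero.1 hm1
        calc ENNReal.ofReal (Real.logb 2 (hmd d x (1 / (ki i : ℝ)) m).toReal) / (m : ℝ≥0∞)
            ≤ ENNReal.ofReal ((m : ℝ) * Real.logb 2 (θi i)⁻¹) / (m : ℝ≥0∞) :=
              ENNReal.div_le_div_right (ENNReal.ofReal_le_ofReal hlog) _
        _ = ((m : ℝ≥0∞) * ENNReal.ofReal (Real.logb 2 (θi i)⁻¹)) / (m : ℝ≥0∞) := by
              rw [ENNReal.ofReal_mul (by positivity : (0:ℝ) ≤ (m:ℝ))]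
              congr 1
              rw [ENNReal.ofReal_natCast]
        _ = ENNReal.ofReal (Real.logb 2 (θi i)⁻¹) := by
              rw [mul_comm, mul_div_assoc, ENNReal.div_self hm0 (by simp), mul_one]
      calc liminfh d x (1 / (ki i : ℝ))
          ≤ Filter.liminf (fun _ : ℕ => ENNReal.ofReal (Real.logb 2 (θi i)⁻¹)) atTop :=
            Filter.liminf_le_liminf hev
      _ = ENNReal.ofReal (Real.logb 2 (θi i)⁻¹) := Filter.liminf_const _
      _ = ENNReal.ofReal (1 / (i + 1)) := by rw [hθlogb i]
    -- conclude
    have hIle : ∀ i : ℕ, (⨅ (k : ℕ) (_ : 1 ≤ k), liminfh d x (1 / (k : ℝ)))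
        ≤ ENNReal.ofReal (1 / (i + 1)) := fun i =>
      le_trans (iInf₂_le (ki i) (hki1 i)) (hbound i)
    refine le_antisymm ?_ zero_le
    have ht0 : Tendsto (fun i : ℕ => ENNReal.ofReal (1 / (i + 1))) atTop (nhds 0) := by
      rw [show (0 : ℝ≥0∞) = ENNReal.ofReal 0 by simp]
      exact (ENNReal.continuous_ofReal.tendsto 0).comp tendsto_one_div_add_atTop_nhds_zero_nat
    rw [← ht0.liminf_eq]
    exact Filter.le_liminf_of_le (by isBoundedDefault) (Filter.Eventually.of_forall hIle)
  refine ⟨?_, hae⟩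
  have h0 := ae_iff.mp hae
  have hseteq : {x : Wd d → Pt d | 0 < ⨅ (k : ℕ) (_ : 1 ≤ k), liminfh d x (1 / (k : ℝ))}
      = {x : Wd d → Pt d | ¬ (⨅ (k : ℕ) (_ : 1 ≤ k), liminfh d x (1 / (k : ℝ))) = 0} := by
    ext x
    simp [pos_iff_ne_zero]
  rw [hseteq]
  exact h0
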